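/- The tokens generated by the autoregressive machine coincide with the Turing machine's transitions: for every embeddable configuration c and every t ≥ 0, π(f_π^t(embed(c))) = δ(g_δ^t(c)). In particular, the autoregressive machine generates an accepting (resp. rejecting) token exactly when the Turing machine enters an accepting (resp. rejecting) state. -/

import Mathlib

variable {Q A : Type*}

/-- A Turing machine configuration: control state, tape contents, head position. -/
abbrev Config (Q A : Type*) := Q × (ℤ → A) × ℤ

/-- The transition function extended to configurations:
`δ(q, σ, p) := δ(q, σ p)`. -/
def extDelta (δ : Q → A → Q × A × ℤ) (c : Config Q A) : Q × A × ℤ :=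
  δ c.1 (c.2.1 c.2.2)

/-- Update of a configuration by a token `(q', a, d)`:
`Update((q,σ,p), (q',a,d)) = (q', σ[p ↦ a], p + d)`. -/
def Update (c : Config Q A) (x : Q × A × ℤ) : Config Q A :=
  (x.1, Function.update c.2.1 c.2.2 x.2.1, c.2.2 + x.2.2)

/-- Update extended to finite token sequences by left-to-right folding. -/
def UpdateSeq (c : Config Q A) (xs : List (Q × A × ℤ)) : Config Q A :=
  xs.foldl Update c

/-- One step of the Turing machine on configurations: `g_δ(c) = Update(c, δ(c))`. -/
def gStep (δ : Q → A → Q × A × ℤ) (c : Config Q A) : Config Q A :=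
  Update c (extDelta δ c)

/-- Translational equivalence of Turing machine configurations. -/
def TransEquiv (c₁ c₂ : Config Q A) : Prop :=
  c₁.1 = c₂.1 ∧
    ∃ k : ℤ, (∀ i : ℤ, c₁.2.1 i = c₂.2.1 (i - k)) ∧ c₁.2.2 = c₂.2.2 + k

/-- Position of the rightmost non-blank symbol on the tape. -/
noncomputable def maxPos (b : A) (σ : ℤ → A) : ℤ := sSup {j : ℤ | σ j ≠ b}

/-- Position of the leftmost non-blank symbol on the tape. -/
noncomputable def minPos (b : A) (σ : ℤ → A) : ℤ := sInf {j : ℤ | σ j ≠ b}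

/-- A configuration is embeddable if the set of non-blank positions is finite and
nonempty and the head position satisfies `min_pos − 1 ≤ p ≤ max_pos + 1`. -/
def Embeddable (b : A) (c : Config Q A) : Prop :=
  {j : ℤ | c.2.1 j ≠ b}.Finite ∧ {j : ℤ | c.2.1 j ≠ b}.Nonempty ∧
    minPos b c.2.1 - 1 ≤ c.2.2 ∧ c.2.2 ≤ maxPos b c.2.1 + 1

/-- The move `d_i` of the `i`-th token (1-indexed) of the embedding, given the
leftmost non-blank position `l`, rightmost non-blank position `m`, and head
position `p`:  `d_i = +1` for `1 ≤ i ≤ m − l`; at `i = m − l + 1` it is `+1` if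
`p = m + 1`, `0` if `p = m`, and `−1` if `p ≤ m − 1`; and `d_i = −1` afterwards. -/
def moveAt (l m p : ℤ) (i : ℕ) : ℤ :=
  if (i : ℤ) ≤ m - l then 1
  else if (i : ℤ) = m - l + 1 then
    (if p = m + 1 then 1 else if p = m then 0 else -1)
  else -1

/-- The tape position read by the `i`-th token (1-indexed) of the embedding:
`min_pos + ∑_{j=1}^{i−1} d_j`. -/
def posAt (l m p : ℤ) (i : ℕ) : ℤ :=
  l + ∑ j ∈ Finset.range (i - 1), moveAt l m p (j + 1)

/-- Length of the embedding:
`n = (max_pos − min_pos) + max(max_pos − p − 1, 0) + 1`. -/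
noncomputable def embedLen (b : A) (c : Config Q A) : ℕ :=
  (maxPos b c.2.1 - minPos b c.2.1).toNat + (maxPos b c.2.1 - c.2.2 - 1).toNat + 1

/-- The embedding of an (embeddable) configuration `c = (q, σ, p)` as a token
sequence `(x₁, …, x_n)` with `x_i = (q, σ(min_pos + ∑_{j<i} d_j), d_i)`. -/
noncomputable def embed (b : A) (c : Config Q A) : List (Q × A × ℤ) :=
  List.ofFn (fun i : Fin (embedLen b c) =>
    (c.1, c.2.1 (posAt (minPos b c.2.1) (maxPos b c.2.1) c.2.2 (i + 1)),
      moveAt (minPos b c.2.1) (maxPos b c.2.1) c.2.2 (i + 1)))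

/-- The next-token generator of the autoregressive representation of the Turing
machine: `π(x) := δ(Update(c₀, x))`, where `c₀ = (q₀, fun _ ↦ b, 0)`. -/
def nextTok (δ : Q → A → Q × A × ℤ) (q₀ : Q) (b : A)
    (xs : List (Q × A × ℤ)) : Q × A × ℤ :=
  extDelta δ (UpdateSeq (q₀, fun _ => b, (0 : ℤ)) xs)

/-- One-step extension of the next-token generator: `f_π(x) = x ++ [π x]`. -/
def fpi (δ : Q → A → Q × A × ℤ) (q₀ : Q) (b : A)
    (xs : List (Q × A × ℤ)) : List (Q × A × ℤ) :=
  xs ++ [nextTok δ q₀ b xs]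


private theorem aux_extDelta' (δ : Q → A → Q × A × ℤ) {c₁ c₂ : Config Q A}
    (h : TransEquiv c₁ c₂) : extDelta δ c₁ = extDelta δ c₂ := by
  obtain ⟨h1, k, h2, h3⟩ := h
  unfold extDelta
  rw [h1, h2, h3, add_sub_cancel_right]

private theorem aux_gStep' (δ : Q → A → Q × A × ℤ) {c₁ c₂ : Config Q A}
    (h : TransEquiv c₁ c₂) : TransEquiv (gStep δ c₁) (gStep δ c₂) := by
  have he := aux_extDelta' δ h
  obtain ⟨h1, k, h2, h3⟩ := h
  refine ⟨by simp [gStep, Update, he], k, ?_, by simp [gStep, Update, he]; omega⟩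
  intro i
  simp only [gStep, Update, he, Function.update_apply]
  by_cases hi : i = c₁.2.2
  · simp [hi, h3, show c₂.2.2 + k - k = c₂.2.2 by ring]
  · rw [if_neg hi, if_neg (by omega), h2]

private theorem key_embed (b : A) (q₀ : Q) (c : Config Q A) (hc : Embeddable b c) :
    TransEquiv (UpdateSeq (q₀, fun _ => b, (0:ℤ)) (embed b c)) c := by
  obtain ⟨hfin, hne, hpl, hpu⟩ := hc
  set σ := c.2.1 with hσ
  set p := c.2.2 with hp
  set l := minPos b σ with hl
  set m := maxPos b σ with hm
  have hbddA : BddAbove {j : ℤ | σ j ≠ b} := hfin.bddAbove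
  have hbddB : BddBelow {j : ℤ | σ j ≠ b} := hfin.bddBelow
  have hlm : l ≤ m := csInf_le_csSup hne hbddB hbddA
  have hlb : ∀ j : ℤ, σ j ≠ b → l ≤ j := fun j h => csInf_le hbddB h
  have hub : ∀ j : ℤ, σ j ≠ b → j ≤ m := fun j h => le_csSup hbddA h
  have hblank : ∀ j : ℤ, j < l ∨ m < j → σ j = b := by
    intro j hj
    by_contra h
    rcases hj with hj | hj
    · exact absurd (hlb j h) (by omega)
    · exact absurd (hub j h) (by omega)
  set S : ℕ → ℤ := fun k => ∑ j ∈ Finset.range k, moveAt l m p (j + 1) with hS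
  have hSsucc : ∀ k : ℕ, S (k + 1) = S k + moveAt l m p (k + 1) := by
    intro k; simp [hS, Finset.sum_range_succ]
  have hS_le : ∀ k : ℕ, (k : ℤ) ≤ m - l → S k = k := by
    intro k
    induction k with
    | zero => simp [hS]
    | succ k ih =>
      intro hk
      push_cast at hk ⊢
      rw [hSsucc, ih (by omega), moveAt, if_pos (by push_cast; omega)]
  have hS_gt : p ≤ m - 1 → ∀ k : ℕ, m - l + 1 ≤ (k : ℤ) → S k = 2 * (m - l) - k := by
    intro hpm k
    induction k with
    | zero => intro h; omega
    | succ k ih =>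
      intro hk
      push_cast at hk
      rw [hSsucc]
      rcases eq_or_lt_of_le (show m - l ≤ (k : ℤ) by omega) with h | h
      · rw [hS_le k (by omega), moveAt, if_neg (by push_cast; omega),
          if_pos (by push_cast; omega), if_neg (by omega), if_neg (by omega)]
        push_cast
        omega
      · rw [ih (by omega), moveAt, if_neg (by push_cast; omega),
          if_neg (by push_cast; omega)]
        push_cast
        omega
  have hpos : ∀ k : ℕ, posAt l m p (k + 1) = l + S k := fun k => rfl
  set N := embedLen b c with hNset
  have hNdef : N = (m - l).toNat + (m - p - 1).toNat + 1 := rfl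
  have hNZ : (N : ℤ) = ((m - l).toNat : ℤ) + ((m - p - 1).toNat : ℤ) + 1 := by
    rw [hNdef]; push_cast; ring
  have hlen : (embed b c).length = N := by
    rw [hNset]; exact List.length_ofFn
  have main : ∀ k : ℕ, k ≤ N →
      UpdateSeq (q₀, fun _ => b, (0:ℤ)) ((embed b c).take k) =
      ((if k = 0 then q₀ else c.1),
        fun j : ℤ => if 0 ≤ j ∧ j < (k : ℤ) ∧ j < m - l + 1 then σ (l + j) else b,
        S k) := by
    intro k
    induction k with
    | zero =>
      intro _
      simp only [List.take_zero, UpdateSeq, List.foldl_nil, if_pos rfl,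
        Prod.mk.injEq]
      refine ⟨rfl, ?_, by simp [hS]⟩
      funext j
      rw [if_neg (by push_cast; omega)]
    | succ k ih =>
      intro hk1
      have hkn : k < N := hk1
      have hk1' : (k : ℤ) + 1 ≤ ((m - l).toNat : ℤ) + ((m - p - 1).toNat : ℤ) + 1 := by
        have h3 : ((k:ℤ) + 1) ≤ (N : ℤ) := by exact_mod_cast hk1
        omega
      have hget : (embed b c)[k]? = some (c.1, σ (l + S k), moveAt l m p (k + 1)) := by
        rw [List.getElem?_eq_getElem (hlen ▸ hkn)]
        simp only [embed, List.getElem_ofFn, ← hσ, ← hl, ← hm, ← hp, hpos]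
      rw [List.take_succ, hget, Option.toList_some]
      have hfold : UpdateSeq (q₀, fun _ => b, (0:ℤ))
          ((embed b c).take k ++ [(c.1, σ (l + S k), moveAt l m p (k + 1))]) =
          Update (UpdateSeq (q₀, fun _ => b, (0:ℤ)) ((embed b c).take k))
            (c.1, σ (l + S k), moveAt l m p (k + 1)) := by
        simp [UpdateSeq, List.foldl_append]
      rw [hfold, ih hkn.le]
      have hSk_bounds : 0 ≤ S k ∧ S k < (k : ℤ) + 1 ∧ S k < m - l + 1 := by
        by_cases hcase : (k : ℤ) ≤ m - l
        · have := hS_le k hcase; omega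
        · have hpm : p ≤ m - 1 := by omega
          have := hS_gt hpm k (by omega)
          omega
      have htape : Function.update
          (fun j : ℤ => if 0 ≤ j ∧ j < (k : ℤ) ∧ j < m - l + 1 then σ (l + j) else b)
          (S k) (σ (l + S k)) =
          fun j : ℤ => if 0 ≤ j ∧ j < (k : ℤ) + 1 ∧ j < m - l + 1 then σ (l + j) else b := by
        funext j
        rw [Function.update_apply]
        by_cases hj : j = S k
        · rw [if_pos hj, hj, if_pos (by omega)]
        · rw [if_neg hj]
          have hiff : (0 ≤ j ∧ j < (k : ℤ) ∧ j < m - l + 1) ↔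
              (0 ≤ j ∧ j < (k : ℤ) + 1 ∧ j < m - l + 1) := by
            by_cases hcase : (k : ℤ) ≤ m - l
            · have := hS_le k hcase; omega
            · omega
          rw [if_congr hiff rfl rfl]
      simp only [Update, Prod.mk.injEq, Nat.succ_ne_zero, if_false]
      refine ⟨trivial, ?_, (hSsucc k).symm⟩
      push_cast
      exact htape
  have htake : (embed b c).take N = embed b c := by
    rw [← hlen, List.take_length]
  have hfinal := main N le_rfl
  rw [htake] at hfinal
  rw [hfinal]
  have hMnat : ((m - l).toNat : ℤ) = m - l := by omega
  refine ⟨by simp [hNdef], -l, ?_, ?_⟩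
  · intro i
    show (if 0 ≤ i ∧ i < (N : ℤ) ∧ i < m - l + 1 then σ (l + i) else b) = σ (i - -l)
    by_cases h : 0 ≤ i ∧ i < (N : ℤ) ∧ i < m - l + 1
    · rw [if_pos h, show i - -l = l + i by ring]
    · rw [if_neg h]
      exact (hblank _ (by omega)).symm
  · show S N = p + -l
    by_cases hp1 : p = m + 1
    · have hN1 : N = (m - l).toNat + 1 := by rw [hNdef]; omega
      rw [hN1, hSsucc, hS_le _ (by omega), moveAt,
        if_neg (by push_cast; omega), if_pos (by push_cast; omega), if_pos hp1]
      omega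
    · by_cases hp2 : p = m
      · have hN1 : N = (m - l).toNat + 1 := by rw [hNdef]; omega
        rw [hN1, hSsucc, hS_le _ (by omega), moveAt,
          if_neg (by push_cast; omega), if_pos (by push_cast; omega),
          if_neg hp1, if_pos hp2]
        omega
      · have hpm : p ≤ m - 1 := by omega
        rw [hS_gt hpm N (by omega)]
        omega


/-- The tokens generated by the autoregressive machine coincide
with the Turing machine's transitions: for every embeddable configuration `c` and
every `t ≥ 0`, `π(f_π^[t](embed c)) = δ(g_δ^[t](c))`.  In particular, for any set
`Qacc` of accepting (resp. `Qrej` of rejecting) states, the autoregressive machine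
generates an accepting (resp. rejecting) token exactly when the Turing machine
enters an accepting (resp. rejecting) state. -/
theorem autoregressive_tokens_eq_TM_transitions [Fintype Q] [Fintype A]
    (b : A) (q₀ : Q)
    (δ : Q → A → Q × A × ℤ)
    (hδ₁ : ∀ q a, (δ q a).2.1 ≠ b)
    (hδ₂ : ∀ q a, (δ q a).2.2 = -1 ∨ (δ q a).2.2 = 0 ∨ (δ q a).2.2 = 1)
    (Qacc Qrej : Set Q)
    (c : Config Q A) (hc : Embeddable b c) :
    ∀ t : ℕ,
      nextTok δ q₀ b ((fpi δ q₀ b)^[t] (embed b c)) = extDelta δ ((gStep δ)^[t] c) ∧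
      ((nextTok δ q₀ b ((fpi δ q₀ b)^[t] (embed b c))).1 ∈ Qacc ↔
        (extDelta δ ((gStep δ)^[t] c)).1 ∈ Qacc) ∧
      ((nextTok δ q₀ b ((fpi δ q₀ b)^[t] (embed b c))).1 ∈ Qrej ↔
        (extDelta δ ((gStep δ)^[t] c)).1 ∈ Qrej) := by
  
  have key := key_embed b q₀ c hc
  have hfold : ∀ xs, UpdateSeq ((q₀, fun _ => b, (0:ℤ)) : Config Q A) (fpi δ q₀ b xs) =
      gStep δ (UpdateSeq ((q₀, fun _ => b, (0:ℤ)) : Config Q A) xs) := by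
    intro xs
    simp [fpi, UpdateSeq, List.foldl_append, nextTok, gStep]
  have inv : ∀ t : ℕ, TransEquiv
      (UpdateSeq ((q₀, fun _ => b, (0:ℤ)) : Config Q A) ((fpi δ q₀ b)^[t] (embed b c)))
      ((gStep δ)^[t] c) := by
    intro t
    induction t with
    | zero => exact key
    | succ t ih =>
      rw [Function.iterate_succ_apply', Function.iterate_succ_apply', hfold]
      exact aux_gStep' δ ih
  intro t
  have h : nextTok δ q₀ b ((fpi δ q₀ b)^[t] (embed b c)) = extDelta δ ((gStep δ)^[t] c) :=
    aux_extDelta' δ (inv t)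
  exact ⟨h, by rw [h], by rw [h]⟩
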